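/- arXiv:2003.03802 — 4 statements merged into one kernel-verified Lean document; each statement's English description precedes it below -/
import Mathlib

section
/- For every q ∈ (0,1) and every x ∈ (0,1), the double series Σ_{n=1}^∞ Σ_{m=1}^∞ (4 q^{2nm}/n)·cos(2πnx) converges absolutely, and Σ_{n=1}^∞ Σ_{m=1}^∞ (4 q^{2nm}/n)·cos(2πnx) = −2·log|Θ_q(x)| + 2·log(q^{1/6}·η(q)) + 2·log(2·sin(πx)). -/
open Real Complex

/-- The Jacobi theta function
`Θ_q(u) = −2 q^{1/4} sin(πu) ∏_{k≥1} (1−q^{2k})(1−2cos(2πu)q^{2k}+q^{4k})` for `q ∈ (0,1)`. -/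
noncomputable def JacobiTheta' (q : ℝ) (u : ℂ) : ℂ :=
  (-2 : ℂ) * ((q ^ ((1 : ℝ) / 4) : ℝ) : ℂ) * Complex.sin (Real.pi * u) *
    ∏' k : ℕ, ((1 - (q : ℂ) ^ (2 * (k + 1))) *
      (1 - 2 * Complex.cos (2 * Real.pi * u) * (q : ℂ) ^ (2 * (k + 1)) + (q : ℂ) ^ (4 * (k + 1))))

/-- The Dedekind eta function `η(q) = q^{1/12} ∏_{k≥1} (1 − q^{2k})` for `q ∈ (0,1)`. -/
noncomputable def dedekindEta' (q : ℝ) : ℝ :=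
  q ^ ((1 : ℝ) / 12) * ∏' k : ℕ, (1 - q ^ (2 * (k + 1)))

private lemma re_ofReal_mul_exp (a b : ℝ) :
    ((a : ℂ) * Complex.exp ((b : ℂ) * Complex.I)).re = a * Real.cos b := by
  simp [Complex.exp_mul_I, Complex.mul_re, Complex.cos_ofReal_re, Complex.sin_ofReal_re]

private lemma im_ofReal_mul_exp (a b : ℝ) :
    ((a : ℂ) * Complex.exp ((b : ℂ) * Complex.I)).im = a * Real.sin b := by
  simp [Complex.exp_mul_I, Complex.mul_im, Complex.cos_ofReal_re, Complex.sin_ofReal_re]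

private lemma hasProd_exp_of_summable_log {f : ℕ → ℝ} (hf : ∀ k, 0 < f k)
    (h : Summable fun k => Real.log (f k)) :
    HasProd f (Real.exp (∑' k, Real.log (f k))) := by
  have h1 := h.hasSum.rexp
  have h2 : (rexp ∘ fun k => Real.log (f k)) = f :=
    funext fun k => Real.exp_log (hf k)
  rwa [h2] at h1

private lemma hasSum_log_aux {r : ℝ} (hr0 : 0 ≤ r) (hr1 : r < 1) (θ : ℝ) :
    HasSum (fun n : ℕ => 4 * r ^ (n + 1) / (n + 1) * Real.cos ((n + 1) * θ))
      (-2 * Real.log (1 - 2 * Real.cos θ * r + r ^ 2)) := by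
  have hGpos : (0 : ℝ) < 1 - 2 * Real.cos θ * r + r ^ 2 := by
    nlinarith [Real.neg_one_le_cos θ, Real.cos_le_one θ, sq_nonneg (1 - r), sq_nonneg (1 + r)]
  set z : ℂ := (r : ℂ) * Complex.exp ((θ : ℂ) * Complex.I) with hz_def
  have hnz : ‖z‖ < 1 := by
    have : ‖z‖ = r := by
      rw [hz_def, norm_mul, Complex.norm_exp]
      simp [_root_.abs_of_nonneg hr0]
    rw [this]; exact hr1
  have h := Complex.hasSum_taylorSeries_neg_log hnz
  have h1 : HasSum (fun n : ℕ => z ^ (n + 1) / ((n + 1 : ℕ) : ℂ))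
      (-Complex.log (1 - z) - ∑ i ∈ Finset.range 1, z ^ i / (i : ℂ)) :=
    (hasSum_nat_add_iff' 1).2 h
  simp only [Finset.range_one, Finset.sum_singleton, Nat.cast_zero, div_zero, sub_zero] at h1
  have h2 := (Complex.hasSum_re h1).mul_left 4
  have hterm : ∀ n : ℕ, 4 * (z ^ (n + 1) / ((n + 1 : ℕ) : ℂ)).re
      = 4 * r ^ (n + 1) / ((n : ℝ) + 1) * Real.cos (((n : ℝ) + 1) * θ) := by
    intro n
    have hzp : z ^ (n + 1) / ((n + 1 : ℕ) : ℂ)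
        = (((r ^ (n + 1) / ((n : ℝ) + 1) : ℝ)) : ℂ)
          * Complex.exp (((((n : ℝ) + 1) * θ : ℝ) : ℂ) * Complex.I) := by
      have harg : ((n + 1 : ℕ) : ℂ) * ((θ : ℂ) * Complex.I)
          = (((((n : ℝ) + 1) * θ : ℝ)) : ℂ) * Complex.I := by push_cast; ring
      rw [hz_def, mul_pow, ← Complex.exp_nat_mul, harg, Complex.ofReal_div,
        div_mul_eq_mul_div]
      push_cast
      ring
    rw [hzp, re_ofReal_mul_exp]
    ring
  have hval : 4 * (-Complex.log (1 - z)).re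
      = -2 * Real.log (1 - 2 * Real.cos θ * r + r ^ 2) := by
    have hre : (1 - z).re = 1 - r * Real.cos θ := by
      rw [hz_def, Complex.sub_re, Complex.one_re, re_ofReal_mul_exp]
    have him : (1 - z).im = -(r * Real.sin θ) := by
      rw [hz_def, Complex.sub_im, Complex.one_im, im_ofReal_mul_exp]
      ring
    have habs : ‖1 - z‖ = Real.sqrt (1 - 2 * Real.cos θ * r + r ^ 2) := by
      rw [Complex.norm_def]
      congr 1
      rw [Complex.normSq_apply, hre, him]
      nlinarith [Real.sin_sq_add_cos_sq θ]
    rw [Complex.neg_re, Complex.log_re, habs, Real.log_sqrt hGpos.le]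
    ring
  have hfe : (fun n : ℕ => 4 * (z ^ (n + 1) / ((n + 1 : ℕ) : ℂ)).re)
      = fun n : ℕ => 4 * r ^ (n + 1) / ((n : ℝ) + 1) * Real.cos (((n : ℝ) + 1) * θ) :=
    funext hterm
  rw [hval] at h2
  rw [show (fun n : ℕ => 4 * r ^ (n + 1) / ((n : ℝ) + 1) * Real.cos (((n : ℝ) + 1) * θ))
      = _ from hfe.symm]
  exact h2

set_option maxHeartbeats 2000000 in
/-- The covariance identity of Lemma 2.1 (lem:field-covar):
`Σ_{n,m≥1} (4 q^{2nm}/n) cos(2πnx) = −2 log|Θ_q(x)| + 2 log(q^{1/6}η(q)) + 2 log(2 sin(πx))`,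
with the double series converging absolutely. -/
theorem double_sum_cos_eq_log_theta {q x : ℝ}
    (hq : q ∈ Set.Ioo (0 : ℝ) 1) (hx : x ∈ Set.Ioo (0 : ℝ) 1) :
    Summable (fun p : ℕ × ℕ =>
        |4 * q ^ (2 * (p.1 + 1) * (p.2 + 1)) / (p.1 + 1) * Real.cos (2 * π * (p.1 + 1) * x)|) ∧
      ∑' p : ℕ × ℕ,
          4 * q ^ (2 * (p.1 + 1) * (p.2 + 1)) / (p.1 + 1) * Real.cos (2 * π * (p.1 + 1) * x) =
        -2 * Real.log ‖JacobiTheta' q (x : ℂ)‖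
          + 2 * Real.log (q ^ ((1 : ℝ) / 6) * dedekindEta' q)
          + 2 * Real.log (2 * Real.sin (π * x)) := by
  obtain ⟨hq0, hq1⟩ := hq
  obtain ⟨hx0, hx1⟩ := hx
  set f : ℕ × ℕ → ℝ := fun p =>
    4 * q ^ (2 * (p.1 + 1) * (p.2 + 1)) / (p.1 + 1) * Real.cos (2 * π * (p.1 + 1) * x)
    with hf_def
  -- geometric comparisons
  have hq2 : q ^ 2 < 1 := by nlinarith
  have hgeo : Summable (fun n : ℕ => q ^ (n + 1)) :=
    (summable_nat_add_iff 1).2 (summable_geometric_of_lt_one hq0.le hq1)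
  have hmul : Summable (fun p : ℕ × ℕ => q ^ (p.1 + 1) * q ^ (p.2 + 1)) :=
    hgeo.mul_of_nonneg hgeo (fun n => pow_nonneg hq0.le _) (fun n => pow_nonneg hq0.le _)
  have hbound : ∀ p : ℕ × ℕ, |f p| ≤ 4 * (q ^ (p.1 + 1) * q ^ (p.2 + 1)) := by
    rintro ⟨n, m⟩
    have hE : (n + 1) + (m + 1) ≤ 2 * (n + 1) * (m + 1) := by
      have h1 : n + 1 ≤ (n + 1) * (m + 1) := Nat.le_mul_of_pos_right _ (Nat.succ_pos m)
      have h2 : m + 1 ≤ (n + 1) * (m + 1) := Nat.le_mul_of_pos_left _ (Nat.succ_pos n)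
      calc (n + 1) + (m + 1) ≤ (n + 1) * (m + 1) + (n + 1) * (m + 1) := add_le_add h1 h2
        _ = 2 * (n + 1) * (m + 1) := by ring
    have hpow : q ^ (2 * (n + 1) * (m + 1)) ≤ q ^ ((n + 1) + (m + 1)) :=
      pow_le_pow_of_le_one hq0.le hq1.le hE
    have hqE : (0:ℝ) ≤ q ^ (2 * (n + 1) * (m + 1)) := pow_nonneg hq0.le _
    have hn1 : (1:ℝ) ≤ (n : ℝ) + 1 := le_add_of_nonneg_left (Nat.cast_nonneg n)
    have step1 : |f (n, m)| ≤ 4 * q ^ (2 * (n + 1) * (m + 1)) := by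
      rw [hf_def]
      simp only [abs_mul]
      have h4 : |4 * q ^ (2 * (n + 1) * (m + 1)) / ((n : ℝ) + 1)|
          = 4 * q ^ (2 * (n + 1) * (m + 1)) / ((n : ℝ) + 1) := abs_of_nonneg (by positivity)
      rw [h4]
      calc 4 * q ^ (2 * (n + 1) * (m + 1)) / ((n : ℝ) + 1) * |Real.cos (2 * π * ((n:ℝ) + 1) * x)|
          ≤ 4 * q ^ (2 * (n + 1) * (m + 1)) / ((n : ℝ) + 1) * 1 :=
            mul_le_mul_of_nonneg_left (Real.abs_cos_le_one _) (by positivity)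
        _ = 4 * q ^ (2 * (n + 1) * (m + 1)) / ((n : ℝ) + 1) := mul_one _
        _ ≤ 4 * q ^ (2 * (n + 1) * (m + 1)) := by
            apply div_le_self (by positivity) hn1
    calc |f (n, m)| ≤ 4 * q ^ (2 * (n + 1) * (m + 1)) := step1
      _ ≤ 4 * q ^ ((n + 1) + (m + 1)) := by linarith
      _ = 4 * (q ^ (n + 1) * q ^ (m + 1)) := by rw [pow_add]
  have habs : Summable (fun p : ℕ × ℕ => |f p|) :=
    Summable.of_nonneg_of_le (fun p => abs_nonneg _) hbound (hmul.mul_left 4)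
  have hsf : Summable f := habs.of_abs
  refine ⟨habs, ?_⟩
  -- the factors of the product
  set g : ℕ → ℝ := fun k =>
    1 - 2 * Real.cos (2 * π * x) * q ^ (2 * (k + 1)) + q ^ (4 * (k + 1)) with hg_def
  set u : ℕ → ℝ := fun k => 1 - q ^ (2 * (k + 1)) with hu_def
  have hrk0 : ∀ k : ℕ, 0 < q ^ (2 * (k + 1)) := fun k => pow_pos hq0 _
  have hrk1 : ∀ k : ℕ, q ^ (2 * (k + 1)) < 1 := fun k => pow_lt_one₀ hq0.le hq1 (by omega)
  have hsq : ∀ k : ℕ, (q ^ (2 * (k + 1))) ^ 2 = q ^ (4 * (k + 1)) := by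
    intro k
    rw [← pow_mul]
    congr 1
    ring
  have hgpos : ∀ k, 0 < g k := by
    intro k
    rw [hg_def]
    simp only
    rw [← hsq k]
    nlinarith [Real.cos_le_one (2 * π * x), Real.neg_one_le_cos (2 * π * x), hrk0 k, hrk1 k,
      sq_nonneg (1 - q ^ (2 * (k + 1)))]
  have hupos : ∀ k, 0 < u k := fun k => by
    rw [hu_def]; simp only; linarith [hrk1 k]
  -- inner sums
  have hinner : ∀ k : ℕ, HasSum (fun n : ℕ => f (n, k)) (-2 * Real.log (g k)) := by
    intro k
    have h := hasSum_log_aux (hrk0 k).le (hrk1 k) (2 * π * x)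
    rw [hsq k] at h
    have hfun : (fun n : ℕ => 4 * (q ^ (2 * (k + 1))) ^ (n + 1) / ((n : ℝ) + 1)
        * Real.cos (((n : ℝ) + 1) * (2 * π * x))) = fun n : ℕ => f (n, k) := by
      funext n
      rw [hf_def]
      simp only [← pow_mul]
      have e1 : 2 * (k + 1) * (n + 1) = 2 * (n + 1) * (k + 1) := by ring
      have e2 : ((n : ℝ) + 1) * (2 * π * x) = 2 * π * ((n : ℝ) + 1) * x := by ring
      rw [e1, e2]
    rw [← hfun]
    exact h
  -- swap and sum fiberwise
  have hFs : Summable (fun p : ℕ × ℕ => f (p.2, p.1)) :=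
    (Equiv.prodComm ℕ ℕ).summable_iff.2 hsf
  have hswap : ∑' p : ℕ × ℕ, f (p.2, p.1) = ∑' p, f p :=
    (Equiv.prodComm ℕ ℕ).tsum_eq f
  have hbig : HasSum (fun k => -2 * Real.log (g k)) (∑' p : ℕ × ℕ, f (p.2, p.1)) :=
    hFs.hasSum.prod_fiberwise hinner
  have hglog : Summable (fun k => Real.log (g k)) := by
    have h1 := hbig.summable.mul_left (-(1/2) : ℝ)
    have h2 : (fun k => (-(1/2) : ℝ) * (-2 * Real.log (g k))) = fun k => Real.log (g k) := by
      funext k; ring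
    rwa [h2] at h1
  set S2 : ℝ := ∑' k, Real.log (g k) with hS2_def
  have hLHS : ∑' p, f p = -2 * S2 := by
    rw [← hswap, ← hbig.tsum_eq, hS2_def, ← tsum_mul_left]
  -- summability of log (u k)
  have h1q2 : (0:ℝ) < 1 - q ^ 2 := by nlinarith
  have hulog : Summable (fun k => Real.log (u k)) := by
    have hb : ∀ k : ℕ, |Real.log (u k)| ≤ (1 - q ^ 2)⁻¹ * (q ^ 2) ^ (k + 1) := by
      intro k
      have hak : q ^ (2 * (k + 1)) = (q ^ 2) ^ (k + 1) := by rw [← pow_mul]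
      have ha_le : q ^ (2 * (k + 1)) ≤ q ^ 2 :=
        pow_le_pow_of_le_one hq0.le hq1.le (by omega)
      have huk1 : u k ≤ 1 := by
        rw [hu_def]; simp only; linarith [hrk0 k]
      have hlog_le : Real.log (u k)⁻¹ ≤ (u k)⁻¹ - 1 :=
        Real.log_le_sub_one_of_pos (inv_pos.2 (hupos k))
      have habs_eq : |Real.log (u k)| = Real.log (u k)⁻¹ := by
        rw [Real.log_inv, abs_of_nonpos (Real.log_nonpos (hupos k).le huk1)]
      rw [habs_eq]
      have hinv : (u k)⁻¹ - 1 = q ^ (2 * (k + 1)) / u k := by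
        have hne : 1 - q ^ (2 * (k + 1)) ≠ 0 := ne_of_gt (by linarith [hrk1 k])
        rw [hu_def]; simp only
        field_simp
        ring
      have huge : 1 - q ^ 2 ≤ u k := by
        rw [hu_def]; simp only; linarith
      calc Real.log (u k)⁻¹ ≤ (u k)⁻¹ - 1 := hlog_le
        _ = q ^ (2 * (k + 1)) / u k := hinv
        _ ≤ q ^ (2 * (k + 1)) / (1 - q ^ 2) := by
            apply div_le_div_of_nonneg_left (pow_nonneg hq0.le _) h1q2 huge
        _ = (1 - q ^ 2)⁻¹ * (q ^ 2) ^ (k + 1) := by rw [hak, div_eq_inv_mul]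
    have hgs : Summable (fun k : ℕ => (1 - q ^ 2)⁻¹ * (q ^ 2) ^ (k + 1)) :=
      ((summable_nat_add_iff 1).2 (summable_geometric_of_lt_one (by positivity) hq2)).mul_left _
    exact (Summable.of_nonneg_of_le (fun k => abs_nonneg _) hb hgs).of_abs
  set S1 : ℝ := ∑' k, Real.log (u k) with hS1_def
  have hP1 : HasProd u (Real.exp S1) := hasProd_exp_of_summable_log hupos hulog
  have hP2 : HasProd g (Real.exp S2) := hasProd_exp_of_summable_log hgpos hglog
  have hP12 : HasProd (fun k => u k * g k) (Real.exp S1 * Real.exp S2) := hP1.mul hP2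
  -- complex product
  have hPC : HasProd (fun k => ((u k * g k : ℝ) : ℂ)) (((Real.exp S1 * Real.exp S2 : ℝ)) : ℂ) :=
    hP12.map Complex.ofRealHom.toMonoidHom Complex.continuous_ofReal
  have hfactor : (fun k : ℕ => ((u k * g k : ℝ) : ℂ))
      = fun k : ℕ => ((1 - (q : ℂ) ^ (2 * (k + 1))) *
        (1 - 2 * Complex.cos (2 * Real.pi * (x:ℂ)) * (q : ℂ) ^ (2 * (k + 1))
          + (q : ℂ) ^ (4 * (k + 1)))) := by
    funext k
    have hcos : Complex.cos (2 * (Real.pi : ℂ) * (x : ℂ)) = ((Real.cos (2 * π * x) : ℝ) : ℂ) := by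
      rw [Complex.ofReal_cos]
      norm_cast
    rw [hcos, hu_def, hg_def]
    push_cast
    ring
  have hT : (∏' k : ℕ, ((1 - (q : ℂ) ^ (2 * (k + 1))) *
      (1 - 2 * Complex.cos (2 * Real.pi * (x:ℂ)) * (q : ℂ) ^ (2 * (k + 1))
        + (q : ℂ) ^ (4 * (k + 1)))))
      = (((Real.exp S1 * Real.exp S2 : ℝ)) : ℂ) := by
    rw [← hfactor]
    exact hPC.tprod_eq
  -- sin positivity
  have hsin : 0 < Real.sin (π * x) := by
    apply Real.sin_pos_of_pos_of_lt_pi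
    · positivity
    · nlinarith [Real.pi_pos]
  -- theta value
  have htheta : JacobiTheta' q (x : ℂ)
      = (((-2) * q ^ ((1:ℝ)/4) * Real.sin (π * x) * (Real.exp S1 * Real.exp S2) : ℝ) : ℂ) := by
    rw [JacobiTheta', hT]
    have hsin' : Complex.sin ((Real.pi : ℂ) * (x : ℂ)) = ((Real.sin (π * x) : ℝ) : ℂ) := by
      rw [Complex.ofReal_sin]
      norm_cast
    rw [hsin']
    push_cast
    ring
  have habs_theta : ‖JacobiTheta' q (x : ℂ)‖
      = (2 * Real.sin (π * x)) * (q ^ ((1:ℝ)/4) * Real.exp S1) * Real.exp S2 := by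
    rw [htheta, Complex.norm_real, Real.norm_eq_abs]
    have hpos : (0:ℝ) ≤ 2 * q ^ ((1:ℝ)/4) * Real.sin (π * x) * (Real.exp S1 * Real.exp S2) := by
      have : (0:ℝ) < q ^ ((1:ℝ)/4) := Real.rpow_pos_of_pos hq0 _
      positivity
    rw [show (-2) * q ^ ((1:ℝ)/4) * Real.sin (π * x) * (Real.exp S1 * Real.exp S2)
        = -(2 * q ^ ((1:ℝ)/4) * Real.sin (π * x) * (Real.exp S1 * Real.exp S2)) by ring,
      abs_neg, _root_.abs_of_nonneg hpos]
    ring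
  have hq14 : (0:ℝ) < q ^ ((1:ℝ)/4) := Real.rpow_pos_of_pos hq0 _
  have hlog_theta : Real.log ‖JacobiTheta' q (x : ℂ)‖
      = Real.log (2 * Real.sin (π * x)) + Real.log (q ^ ((1:ℝ)/4) * Real.exp S1) + S2 := by
    rw [habs_theta, Real.log_mul (by positivity) (Real.exp_ne_zero _),
      Real.log_mul (by positivity) (by positivity), Real.log_exp]
  -- eta value
  have heta : q ^ ((1:ℝ)/6) * dedekindEta' q = q ^ ((1:ℝ)/4) * Real.exp S1 := by
    rw [dedekindEta']
    have hprod_u : (∏' k : ℕ, (1 - q ^ (2 * (k + 1)))) = Real.exp S1 := hP1.tprod_eq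
    rw [hprod_u, ← mul_assoc, ← Real.rpow_add hq0]
    norm_num
  rw [hLHS, hlog_theta, heta]
  ring
end

section
/- Let (α_{n,m})_{n,m≥1} and (β_{n,m})_{n,m≥1} be a jointly independent family of real random variables on a probability space (Ω, ℙ), each with the standard Gaussian law N(0,1). Then almost surely the following holds: for every x ∈ [0,1] and every q in the open unit disc 𝔻 ⊂ ℂ, the series F_x(q) := 2·Σ_{n,m≥1} (q^{nm}/√n)·(α_{n,m}·cos(2πnx) + β_{n,m}·sin(2πnx)) converges absolutely, and for every x ∈ [0,1] the function q ↦ F_x(q) is analytic on 𝔻. -/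
open Real Complex MeasureTheory ProbabilityTheory Metric
open scoped ENNReal NNReal

private noncomputable def gterm (a b : ℕ → ℕ → ℝ) (x : ℝ) (q : ℂ) (p : ℕ × ℕ) : ℂ :=
  (2 : ℂ) * q ^ ((p.1 + 1) * (p.2 + 1)) / (Real.sqrt (p.1 + 1) : ℂ) *
    (((a p.1 p.2 : ℝ) : ℂ) * Real.cos (2 * π * (p.1 + 1) * x) +
      ((b p.1 p.2 : ℝ) : ℂ) * Real.sin (2 * π * (p.1 + 1) * x))

private lemma gterm_bound (a b : ℕ → ℕ → ℝ) (x : ℝ) {q : ℂ} {r : ℝ} (hq : ‖q‖ ≤ r)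
    (hr : 0 ≤ r) (p : ℕ × ℕ) :
    ‖gterm a b x q p‖ ≤ 2 * ((|a p.1 p.2| + |b p.1 p.2|) * r ^ ((p.1 + 1) * (p.2 + 1))) := by
  have hs : (1 : ℝ) ≤ ‖(Real.sqrt (p.1 + 1) : ℂ)‖ := by
    rw [Complex.norm_real, Real.norm_eq_abs, _root_.abs_of_nonneg (Real.sqrt_nonneg _)]
    rw [Real.one_le_sqrt]
    push_cast
    linarith [Nat.cast_nonneg (α := ℝ) p.1]
  have hc : ‖(((a p.1 p.2 : ℝ) : ℂ) * Real.cos (2 * π * (p.1 + 1) * x) +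
      ((b p.1 p.2 : ℝ) : ℂ) * Real.sin (2 * π * (p.1 + 1) * x))‖ ≤ |a p.1 p.2| + |b p.1 p.2| := by
    refine (norm_add_le _ _).trans ?_
    gcongr
    · rw [norm_mul, Complex.norm_real, Complex.norm_real, Real.norm_eq_abs, Real.norm_eq_abs]
      calc |a p.1 p.2| * |Real.cos _| ≤ |a p.1 p.2| * 1 := by
            gcongr; exact Real.abs_cos_le_one _
        _ = _ := mul_one _
    · rw [norm_mul, Complex.norm_real, Complex.norm_real, Real.norm_eq_abs, Real.norm_eq_abs]
      calc |b p.1 p.2| * |Real.sin _| ≤ |b p.1 p.2| * 1 := by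
            gcongr; exact Real.abs_sin_le_one _
        _ = _ := mul_one _
  have heq : ‖gterm a b x q p‖ = 2 * ‖q‖ ^ ((p.1 + 1) * (p.2 + 1)) /
      ‖(Real.sqrt (p.1 + 1) : ℂ)‖ *
      ‖(((a p.1 p.2 : ℝ) : ℂ) * Real.cos (2 * π * (p.1 + 1) * x) +
        ((b p.1 p.2 : ℝ) : ℂ) * Real.sin (2 * π * (p.1 + 1) * x))‖ := by
    rw [gterm, norm_mul, norm_div, norm_mul, norm_pow]
    norm_num
  rw [heq]
  calc 2 * ‖q‖ ^ ((p.1 + 1) * (p.2 + 1)) / ‖(Real.sqrt (p.1 + 1) : ℂ)‖ * _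
      ≤ 2 * ‖q‖ ^ ((p.1 + 1) * (p.2 + 1)) * ‖(((a p.1 p.2 : ℝ) : ℂ) * Real.cos (2 * π * (p.1 + 1) * x) +
        ((b p.1 p.2 : ℝ) : ℂ) * Real.sin (2 * π * (p.1 + 1) * x))‖ := by
        apply mul_le_mul_of_nonneg_right _ (norm_nonneg _)
        exact div_le_self (by positivity) hs
    _ ≤ 2 * r ^ ((p.1 + 1) * (p.2 + 1)) * (|a p.1 p.2| + |b p.1 p.2|) := by
        gcongr
    _ = 2 * ((|a p.1 p.2| + |b p.1 p.2|) * r ^ ((p.1 + 1) * (p.2 + 1))) := by ring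

private lemma gdet (a b : ℕ → ℕ → ℝ)
    (h : ∀ r : ℝ, 0 ≤ r → r < 1 →
      Summable (fun p : ℕ × ℕ => (|a p.1 p.2| + |b p.1 p.2|) * r ^ ((p.1 + 1) * (p.2 + 1)))) :
    (∀ x ∈ Set.Icc (0 : ℝ) 1, ∀ q ∈ ball (0 : ℂ) 1,
      Summable (fun p : ℕ × ℕ => ‖gterm a b x q p‖)) ∧
    ∀ x ∈ Set.Icc (0 : ℝ) 1,
      AnalyticOnNhd ℂ (fun q => ∑' p : ℕ × ℕ, gterm a b x q p) (ball 0 1) := by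
  constructor
  · intro x _ q hq
    rw [mem_ball, dist_zero_right] at hq
    exact Summable.of_nonneg_of_le (fun p => norm_nonneg _)
      (gterm_bound a b x le_rfl (norm_nonneg q))
      ((h ‖q‖ (norm_nonneg q) hq).mul_left 2)
  · intro x _ z hz
    rw [mem_ball, dist_zero_right] at hz
    set r : ℝ := (1 + ‖z‖) / 2 with hrdef
    have hr0 : 0 ≤ r := by positivity
    have hr1 : r < 1 := by rw [hrdef]; linarith
    have hzr : z ∈ ball (0 : ℂ) r := by
      rw [mem_ball, dist_zero_right, hrdef]; linarith [norm_nonneg z]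
    have hd : DifferentiableOn ℂ (fun q => ∑' p : ℕ × ℕ, gterm a b x q p) (ball 0 r) := by
      refine differentiableOn_tsum_of_summable_norm ((h r hr0 hr1).mul_left 2)
        (fun p => ?_) isOpen_ball (fun p w hw => ?_)
      · apply Differentiable.differentiableOn
        unfold gterm
        fun_prop
      · rw [mem_ball, dist_zero_right] at hw
        exact gterm_bound a b x hw.le hr0 p
    exact hd.analyticAt (isOpen_ball.mem_nhds hzr)

private lemma gsummable_pow {r : ℝ} (hr0 : 0 ≤ r) (hr1 : r < 1) :
    Summable (fun p : ℕ × ℕ => r ^ ((p.1 + 1) * (p.2 + 1))) := by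
  have h := summable_geometric_of_lt_one hr0 hr1
  have hs : Summable (fun p : ℕ × ℕ => r ^ p.1 * r ^ p.2) :=
    h.mul_of_nonneg h (fun n => pow_nonneg hr0 n) (fun n => pow_nonneg hr0 n)
  refine hs.of_nonneg_of_le (fun p => pow_nonneg hr0 _) (fun p => ?_)
  rw [← pow_add]
  exact pow_le_pow_of_le_one hr0 hr1.le (by nlinarith)

private lemma gcountable (a b : ℕ → ℕ → ℝ)
    (h : ∀ k : ℕ, Summable (fun p : ℕ × ℕ =>
      (|a p.1 p.2| + |b p.1 p.2|) * (1 - 1 / ((k : ℝ) + 2)) ^ ((p.1 + 1) * (p.2 + 1)))) :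
    ∀ r : ℝ, 0 ≤ r → r < 1 →
      Summable (fun p : ℕ × ℕ => (|a p.1 p.2| + |b p.1 p.2|) * r ^ ((p.1 + 1) * (p.2 + 1))) := by
  intro r hr0 hr1
  obtain ⟨k, hk⟩ := exists_nat_ge (1 / (1 - r))
  have hpos : (0 : ℝ) < 1 - r := by linarith
  have h2 : (1 : ℝ) / ((k : ℝ) + 2) ≤ 1 - r := by
    rw [div_le_iff₀ (by positivity)]
    rw [div_le_iff₀ hpos] at hk
    nlinarith [Nat.cast_nonneg (α := ℝ) k]
  have hrk : r ≤ 1 - 1 / ((k : ℝ) + 2) := by linarith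
  refine Summable.of_nonneg_of_le (fun p => by positivity) (fun p => ?_) (h k)
  have hb0 : (0 : ℝ) ≤ 1 - 1 / ((k : ℝ) + 2) := le_trans hr0 hrk
  exact mul_le_mul_of_nonneg_left (pow_le_pow_left₀ hr0 hrk _) (by positivity)



private lemma gauss_lintegral_abs_lt_top :
    ∫⁻ x, (‖x‖₊ : ℝ≥0∞) ∂(gaussianReal 0 1) < ⊤ := by
  rw [gaussianReal_of_var_ne_zero 0 one_ne_zero,
    lintegral_withDensity_eq_lintegral_mul _ (measurable_gaussianPDF 0 1)
      (by fun_prop : Measurable fun x : ℝ => (‖x‖₊ : ℝ≥0∞))]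
  have hint : Integrable (fun x : ℝ => gaussianPDFReal 0 1 x * |x|) := by
    have h0 : Integrable (fun x : ℝ => x * Real.exp (-(1/2 : ℝ) * x ^ 2)) :=
      integrable_mul_exp_neg_mul_sq (by norm_num)
    refine (h0.abs.const_mul ((Real.sqrt (2 * π))⁻¹)).congr
      (Filter.Eventually.of_forall fun y => ?_)
    simp only [abs_mul, _root_.abs_of_pos (Real.exp_pos _), gaussianPDFReal]
    push_cast
    rw [show -(y - 0) ^ 2 / (2 * 1) = -(1/2 : ℝ) * y ^ 2 by ring, mul_one]
    ring
  have := hint.lintegral_lt_top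
  refine lt_of_eq_of_lt ?_ this
  refine lintegral_congr fun y => ?_
  simp only [Pi.mul_apply, gaussianPDF]
  rw [← ENNReal.ofReal_coe_nnreal, coe_nnnorm, Real.norm_eq_abs,
    ← ENNReal.ofReal_mul (gaussianPDFReal_nonneg _ _ _)]

private lemma ae_summable {Ω : Type*} [MeasurableSpace Ω] (μ : Measure Ω) [IsProbabilityMeasure μ]
    (A B : ℕ → ℕ → Ω → ℝ)
    (hAmeas : ∀ n m, Measurable (A n m)) (hBmeas : ∀ n m, Measurable (B n m))
    (hAlaw : ∀ n m, μ.map (A n m) = gaussianReal 0 1)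
    (hBlaw : ∀ n m, μ.map (B n m) = gaussianReal 0 1)
    {r : ℝ} (hr0 : 0 ≤ r) (hr1 : r < 1) :
    ∀ᵐ ω ∂μ, Summable (fun p : ℕ × ℕ =>
      (|A p.1 p.2 ω| + |B p.1 p.2 ω|) * r ^ ((p.1 + 1) * (p.2 + 1))) := by
  set F : (ℕ × ℕ) → Ω → ℝ≥0∞ := fun p ω =>
    ((‖A p.1 p.2 ω‖₊ : ℝ≥0∞) + (‖B p.1 p.2 ω‖₊ : ℝ≥0∞)) *
      ENNReal.ofReal (r ^ ((p.1 + 1) * (p.2 + 1))) with hF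
  have hFmeas : ∀ p, Measurable (F p) := fun p => by
    rw [hF]; fun_prop
  have hconst : ∀ X : Ω → ℝ, Measurable X → μ.map X = gaussianReal 0 1 →
      ∫⁻ ω, (‖X ω‖₊ : ℝ≥0∞) ∂μ = ∫⁻ x, (‖x‖₊ : ℝ≥0∞) ∂(gaussianReal 0 1) := by
    intro X hX hlaw
    rw [← hlaw, lintegral_map (by fun_prop) hX]
  have hlint : ∫⁻ ω, ∑' p, F p ω ∂μ < ⊤ := by
    rw [lintegral_tsum (fun p => (hFmeas p).aemeasurable)]
    have heq : ∀ p : ℕ × ℕ, ∫⁻ ω, F p ω ∂μ =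
        (∫⁻ x, (‖x‖₊ : ℝ≥0∞) ∂(gaussianReal 0 1) + ∫⁻ x, (‖x‖₊ : ℝ≥0∞) ∂(gaussianReal 0 1)) *
          ENNReal.ofReal (r ^ ((p.1 + 1) * (p.2 + 1))) := by
      intro p
      rw [hF]
      simp only
      rw [lintegral_mul_const _ (by fun_prop), lintegral_add_left (by fun_prop),
        hconst _ (hAmeas _ _) (hAlaw _ _), hconst _ (hBmeas _ _) (hBlaw _ _)]
    simp_rw [heq]
    rw [ENNReal.tsum_mul_left,
      ← ENNReal.ofReal_tsum_of_nonneg (fun p => pow_nonneg hr0 _) (gsummable_pow hr0 hr1)]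
    exact ENNReal.mul_lt_top
      (ENNReal.add_lt_top.mpr ⟨gauss_lintegral_abs_lt_top, gauss_lintegral_abs_lt_top⟩)
      ENNReal.ofReal_lt_top
  have hae := ae_lt_top (Measurable.ennreal_tsum hFmeas) hlint.ne
  filter_upwards [hae] with ω hω
  have hsum := ENNReal.summable_toReal hω.ne
  refine hsum.congr fun p => ?_
  rw [hF]
  simp only
  rw [ENNReal.toReal_mul, ENNReal.toReal_ofReal (pow_nonneg hr0 _),
    ENNReal.toReal_add ENNReal.coe_ne_top ENNReal.coe_ne_top]
  simp [Real.norm_eq_abs]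

set_option maxHeartbeats 1000000 in
/-- Lemma 2.3 (lem:F): given a jointly independent family of standard Gaussians
`(α_{n,m})_{n,m≥1}`, `(β_{n,m})_{n,m≥1}` (here `A i j` stands for `α_{i+1,j+1}` and
`B i j` for `β_{i+1,j+1}`), almost surely the series
`F_x(q) = 2 Σ_{n,m≥1} (q^{nm}/√n)(α_{n,m} cos(2πnx) + β_{n,m} sin(2πnx))`
converges absolutely for all `x ∈ [0,1]` and `q` in the open unit disc, and for each
`x ∈ [0,1]` the function `q ↦ F_x(q)` is analytic on the open unit disc. -/
theorem gaussian_series_ae_analytic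
    {Ω : Type*} [MeasurableSpace Ω] (μ : Measure Ω) [IsProbabilityMeasure μ]
    (A B : ℕ → ℕ → Ω → ℝ)
    (hAmeas : ∀ n m, Measurable (A n m)) (hBmeas : ∀ n m, Measurable (B n m))
    (hindep : iIndepFun
      (fun i : (ℕ × ℕ) ⊕ (ℕ × ℕ) =>
        Sum.elim (fun p : ℕ × ℕ => A p.1 p.2) (fun p : ℕ × ℕ => B p.1 p.2) i) μ)
    (hAlaw : ∀ n m, μ.map (A n m) = gaussianReal 0 1)
    (hBlaw : ∀ n m, μ.map (B n m) = gaussianReal 0 1) :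
    ∀ᵐ ω ∂μ,
      (∀ x ∈ Set.Icc (0 : ℝ) 1, ∀ q ∈ ball (0 : ℂ) 1,
        Summable (fun p : ℕ × ℕ =>
          ‖(2 : ℂ) * q ^ ((p.1 + 1) * (p.2 + 1)) / (Real.sqrt (p.1 + 1) : ℂ) *
            (((A p.1 p.2 ω : ℝ) : ℂ) * Real.cos (2 * π * (p.1 + 1) * x) +
              ((B p.1 p.2 ω : ℝ) : ℂ) * Real.sin (2 * π * (p.1 + 1) * x))‖)) ∧
      ∀ x ∈ Set.Icc (0 : ℝ) 1,
        AnalyticOnNhd ℂ (fun q : ℂ => ∑' p : ℕ × ℕ,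
          (2 : ℂ) * q ^ ((p.1 + 1) * (p.2 + 1)) / (Real.sqrt (p.1 + 1) : ℂ) *
            (((A p.1 p.2 ω : ℝ) : ℂ) * Real.cos (2 * π * (p.1 + 1) * x) +
              ((B p.1 p.2 ω : ℝ) : ℂ) * Real.sin (2 * π * (p.1 + 1) * x)))
          (ball 0 1) := by
  have hae : ∀ᵐ ω ∂μ, ∀ k : ℕ, Summable (fun p : ℕ × ℕ =>
      (|A p.1 p.2 ω| + |B p.1 p.2 ω|) *
        (1 - 1 / ((k : ℝ) + 2)) ^ ((p.1 + 1) * (p.2 + 1))) := by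
    rw [ae_all_iff]
    intro k
    have hk0 : (0 : ℝ) ≤ 1 - 1 / ((k : ℝ) + 2) := by
      have h1 : 1 / ((k : ℝ) + 2) ≤ 1 := by
        rw [div_le_one (by positivity)]
        linarith [Nat.cast_nonneg (α := ℝ) k]
      linarith
    have hk1 : 1 - 1 / ((k : ℝ) + 2) < 1 := by
      have : (0 : ℝ) < 1 / ((k : ℝ) + 2) := by positivity
      linarith
    exact ae_summable μ A B hAmeas hBmeas hAlaw hBlaw hk0 hk1
  filter_upwards [hae] with ω hω
  have h2 := gcountable (fun n m => A n m ω) (fun n m => B n m ω) hω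
  have h := gdet (fun n m => A n m ω) (fun n m => B n m ω) h2
  simp only [gterm] at h
  exact h
end

section
/- There exists q₀ ∈ (0,1) such that for every q ∈ (0,q₀) and every z ∈ ℂ with 0 < Im z < (3/4)·(−log q)/π, the series Σ_{n=1}^∞ (q^{2n}/(1 − q^{2n}))·sin(2πnz) converges absolutely and Im( π·cos(πz)/sin(πz) + 4π·Σ_{n=1}^∞ (q^{2n}/(1 − q^{2n}))·sin(2πnz) ) < 0. (Note sin(πz) ≠ 0 since Im z > 0.) -/
open Real Complex


lemma my_cosh_le_exp {t : ℝ} (ht : 0 ≤ t) : Real.cosh t ≤ Real.exp t := by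
  rw [Real.cosh_eq]
  have h := Real.exp_le_exp.2 (neg_le_self ht)
  linarith

lemma my_abs_sin_le {w : ℂ} (hw : 0 ≤ w.im) :
    ‖Complex.sin w‖ ≤ Real.exp w.im := by
  have h1 : Complex.sin w = (Complex.exp (-w * I) - Complex.exp (w * I)) * I / 2 := rfl
  have h2 : Real.exp (-w.im) ≤ Real.exp w.im := Real.exp_le_exp.2 (neg_le_self hw)
  calc ‖Complex.sin w‖
      = ‖Complex.exp (-w * I) - Complex.exp (w * I)‖ / 2 := by
        rw [h1, norm_div, norm_mul, Complex.norm_I, mul_one]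
        norm_num
    _ ≤ (‖Complex.exp (-w * I)‖ + ‖Complex.exp (w * I)‖) / 2 := by
        gcongr
        exact norm_sub_le _ _
    _ = (Real.exp w.im + Real.exp (-w.im)) / 2 := by
        rw [Complex.norm_exp, Complex.norm_exp]
        simp [Complex.mul_I_re]
    _ ≤ Real.exp w.im := by linarith

lemma my_sinh_succ_le {t : ℝ} (ht : 0 ≤ t) (m : ℕ) :
    Real.sinh (((m : ℝ) + 1) * t) ≤ ((m : ℝ) + 1) * Real.sinh t * Real.exp ((m : ℝ) * t) := by
  induction m with
  | zero => simp
  | succ m ih =>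
    have hct : Real.cosh t ≤ Real.exp t := my_cosh_le_exp ht
    have hcm : Real.cosh (((m : ℝ) + 1) * t) ≤ Real.exp (((m : ℝ) + 1) * t) :=
      my_cosh_le_exp (by positivity)
    have hst : 0 ≤ Real.sinh t := Real.sinh_nonneg_iff.2 ht
    have hsm : 0 ≤ Real.sinh (((m : ℝ) + 1) * t) := Real.sinh_nonneg_iff.2 (by positivity)
    have heq : (((m + 1 : ℕ) : ℝ) + 1) * t = ((m : ℝ) + 1) * t + t := by push_cast; ring
    rw [heq, Real.sinh_add]
    have he : Real.exp (((m : ℝ) + 1) * t) = Real.exp ((m : ℝ) * t) * Real.exp t := by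
      rw [← Real.exp_add]; ring_nf
    have hem : 0 < Real.exp ((m : ℝ) * t) := Real.exp_pos _
    have het : 0 < Real.exp t := Real.exp_pos _
    have hchp : 0 < Real.cosh t := Real.cosh_pos t
    push_cast
    nlinarith [mul_le_mul ih hct hchp.le (by positivity),
      mul_le_mul_of_nonneg_right hcm hst]

lemma my_sin_im (w : ℂ) : (Complex.sin w).im = Real.cos w.re * Real.sinh w.im := by
  rw [Complex.sin_eq]
  simp [Complex.sin_ofReal_re, Complex.cos_ofReal_re, Complex.sinh_ofReal_re,
    Complex.cosh_ofReal_re]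

lemma my_sin_re (w : ℂ) : (Complex.sin w).re = Real.sin w.re * Real.cosh w.im := by
  rw [Complex.sin_eq]
  simp [Complex.sin_ofReal_re, Complex.cos_ofReal_re, Complex.sinh_ofReal_re,
    Complex.cosh_ofReal_re]

lemma my_cos_im (w : ℂ) : (Complex.cos w).im = -(Real.sin w.re * Real.sinh w.im) := by
  rw [Complex.cos_eq]
  simp [Complex.sin_ofReal_re, Complex.cos_ofReal_re, Complex.sinh_ofReal_re,
    Complex.cosh_ofReal_re]

lemma my_cos_re (w : ℂ) : (Complex.cos w).re = Real.cos w.re * Real.cosh w.im := by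
  rw [Complex.cos_eq]
  simp [Complex.sin_ofReal_re, Complex.cos_ofReal_re, Complex.sinh_ofReal_re,
    Complex.cosh_ofReal_re]



open Real Complex

set_option maxHeartbeats 1000000 in
/-- Lemma B.5 (lem:g): there exists `q₀ ∈ (0,1)` such that for all `q ∈ (0,q₀)` and
all `z` in the strip `0 < Im z < (3/4)·(−log q)/π`, the logarithmic derivative of the
Jacobi theta function, `π cot(πz) + 4π Σ_{n≥1} q^{2n}/(1−q^{2n}) sin(2πnz)`, has negative
imaginary part (the series converging absolutely). -/
theorem exists_q0_theta_log_deriv_im_neg :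
    ∃ q₀ ∈ Set.Ioo (0 : ℝ) 1, ∀ q ∈ Set.Ioo (0 : ℝ) q₀, ∀ z : ℂ,
      0 < z.im → z.im < 3 / 4 * (-Real.log q) / π →
      Summable (fun n : ℕ => ‖
        (q : ℂ) ^ (2 * (n + 1)) / (1 - (q : ℂ) ^ (2 * (n + 1))) *
          Complex.sin (2 * (π : ℂ) * (n + 1) * z)‖) ∧
      ((π : ℂ) * Complex.cos ((π : ℂ) * z) / Complex.sin ((π : ℂ) * z) +
          4 * (π : ℂ) * ∑' n : ℕ,
            (q : ℂ) ^ (2 * (n + 1)) / (1 - (q : ℂ) ^ (2 * (n + 1))) *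
              Complex.sin (2 * (π : ℂ) * (n + 1) * z)).im < 0 := by
  refine ⟨1/10000, ⟨by norm_num, by norm_num⟩, ?_⟩
  rintro q ⟨hq0, hq1⟩ z hz0 hz1
  have hπ : (0:ℝ) < π := Real.pi_pos
  have hq1' : q < 1 := by linarith
  set y := z.im with hydef
  set x := z.re with hxdef
  set E := Real.exp (2 * π * y) with hEdef
  set r := q ^ 2 * E with hrdef
  have hE0 : 0 < E := Real.exp_pos _
  have hr0 : 0 < r := by positivity
  -- r² < q
  have hyπ : y * π < 3 / 4 * (-Real.log q) := (lt_div_iff₀ hπ).mp hz1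
  have h4y : 4 * π * y < 3 * (-Real.log q) := by nlinarith
  have hrq : r ^ 2 < q := by
    have h1 : Real.exp (4 * π * y) < Real.exp (3 * -Real.log q) := Real.exp_lt_exp.2 h4y
    have h2 : Real.exp (3 * -Real.log q) = (q⁻¹) ^ 3 := by
      rw [show (3:ℝ) * -Real.log q = ((3:ℕ):ℝ) * (-Real.log q) by norm_num,
        Real.exp_nat_mul, Real.exp_neg, Real.exp_log hq0]
    have h3 : E ^ 2 = Real.exp (4 * π * y) := by
      rw [hEdef, sq, ← Real.exp_add]; ring_nf
    have h4 : r ^ 2 = q ^ 4 * E ^ 2 := by rw [hrdef]; ring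
    have h5 : q ^ 4 * Real.exp (4 * π * y) < q ^ 4 * q⁻¹ ^ 3 :=
      mul_lt_mul_of_pos_left (h2 ▸ h1) (by positivity)
    have h6 : q ^ 4 * q⁻¹ ^ 3 = q := by field_simp
    rw [h4, h3]; linarith
  have hr1 : r < 1/100 := by nlinarith [sq_nonneg (r - 1/100)]
  have hr1' : r < 1 := by linarith
  have hq2 : q ^ 2 ≤ 1/2 := by nlinarith
  -- coefficient facts
  have hqm : ∀ n : ℕ, q ^ (2 * (n + 1)) ≤ q ^ 2 := fun n =>
    pow_le_pow_of_le_one hq0.le hq1'.le (by omega)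
  have hdenpos : ∀ n : ℕ, (0:ℝ) < 1 - q ^ (2 * (n + 1)) := by
    intro n; have := hqm n; nlinarith
  have hcle : ∀ n : ℕ, q ^ (2 * (n + 1)) / (1 - q ^ (2 * (n + 1))) ≤ 2 * q ^ (2 * (n + 1)) := by
    intro n
    rw [div_le_iff₀ (hdenpos n)]
    have h1 := hqm n
    have h2 : (0:ℝ) ≤ q ^ (2 * (n + 1)) := by positivity
    nlinarith
  have hc0 : ∀ n : ℕ, (0:ℝ) ≤ q ^ (2 * (n + 1)) / (1 - q ^ (2 * (n + 1))) := fun n =>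
    div_nonneg (by positivity) (hdenpos n).le
  -- rewriting the general term with real scalars
  have key : ∀ n : ℕ, (q : ℂ) ^ (2 * (n + 1)) / (1 - (q : ℂ) ^ (2 * (n + 1))) *
      Complex.sin (2 * (π : ℂ) * ((n : ℂ) + 1) * z)
      = ((q ^ (2 * (n + 1)) / (1 - q ^ (2 * (n + 1))) : ℝ) : ℂ) *
        Complex.sin (((2 * π * ((n : ℝ) + 1) : ℝ) : ℂ) * z) := by
    intro n
    have h1 : ((q ^ (2 * (n + 1)) / (1 - q ^ (2 * (n + 1))) : ℝ) : ℂ)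
        = (q : ℂ) ^ (2 * (n + 1)) / (1 - (q : ℂ) ^ (2 * (n + 1))) := by
      push_cast; ring
    have h2 : ((2 * π * ((n : ℝ) + 1) : ℝ) : ℂ) * z = 2 * (π : ℂ) * ((n : ℂ) + 1) * z := by
      push_cast; ring
    rw [h1, h2]
  have hWim : ∀ n : ℕ, (((2 * π * ((n : ℝ) + 1) : ℝ) : ℂ) * z).im = 2 * π * ((n : ℝ) + 1) * y :=
    fun n => Complex.im_ofReal_mul _ _
  have hWre : ∀ n : ℕ, (((2 * π * ((n : ℝ) + 1) : ℝ) : ℂ) * z).re = 2 * π * ((n : ℝ) + 1) * x :=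
    fun n => Complex.re_ofReal_mul _ _
  -- abs bound
  have hEr : ∀ n : ℕ, q ^ (2 * (n + 1)) * Real.exp (((n : ℝ) + 1) * (2 * π * y)) = r ^ (n + 1) := by
    intro n
    have h1 : q ^ (2 * (n + 1)) = (q ^ 2) ^ (n + 1) := by rw [← pow_mul]
    have h2 : Real.exp (((n : ℝ) + 1) * (2 * π * y)) = E ^ (n + 1) := by
      rw [hEdef, ← Real.exp_nat_mul]; push_cast; ring_nf
    rw [h1, h2, hrdef, mul_pow]
  have habs : ∀ n : ℕ, ‖(q : ℂ) ^ (2 * (n + 1)) / (1 - (q : ℂ) ^ (2 * (n + 1))) *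
      Complex.sin (2 * (π : ℂ) * ((n : ℂ) + 1) * z)‖ ≤ 2 * r ^ (n + 1) := by
    intro n
    rw [key n, norm_mul, Complex.norm_real, Real.norm_eq_abs]
    have hsin : ‖Complex.sin (((2 * π * ((n : ℝ) + 1) : ℝ) : ℂ) * z)‖
        ≤ Real.exp (2 * π * ((n : ℝ) + 1) * y) := by
      have h := my_abs_sin_le (w := ((2 * π * ((n : ℝ) + 1) : ℝ) : ℂ) * z)
        (by rw [hWim n]; positivity)
      rwa [hWim n] at h
    have hc : |q ^ (2 * (n + 1)) / (1 - q ^ (2 * (n + 1)))| ≤ 2 * q ^ (2 * (n + 1)) := by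
      rw [_root_.abs_of_nonneg (hc0 n)]; exact hcle n
    calc |q ^ (2 * (n + 1)) / (1 - q ^ (2 * (n + 1)))| *
          ‖Complex.sin (((2 * π * ((n : ℝ) + 1) : ℝ) : ℂ) * z)‖
        ≤ (2 * q ^ (2 * (n + 1))) * Real.exp (2 * π * ((n : ℝ) + 1) * y) :=
          mul_le_mul hc hsin (norm_nonneg _) (by positivity)
      _ = 2 * r ^ (n + 1) := by
          rw [show 2 * π * ((n : ℝ) + 1) * y = ((n : ℝ) + 1) * (2 * π * y) by ring,
            mul_assoc, hEr n]
  -- geometric majorant summable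
  have hsumG : Summable (fun n : ℕ => 2 * r ^ (n + 1)) := by
    have h := (summable_geometric_of_lt_one hr0.le hr1').mul_left (2 * r)
    exact h.congr fun n => by rw [pow_succ]; ring
  have hsumabs : Summable (fun n : ℕ => ‖
      (q : ℂ) ^ (2 * (n + 1)) / (1 - (q : ℂ) ^ (2 * (n + 1))) *
        Complex.sin (2 * (π : ℂ) * ((n : ℂ) + 1) * z)‖) :=
    Summable.of_nonneg_of_le (fun n => norm_nonneg _) habs hsumG
  have hsumC : Summable (fun n : ℕ => (q : ℂ) ^ (2 * (n + 1)) / (1 - (q : ℂ) ^ (2 * (n + 1))) *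
      Complex.sin (2 * (π : ℂ) * ((n : ℂ) + 1) * z)) := by
    apply Summable.of_norm
    exact hsumabs
  refine ⟨hsumabs, ?_⟩
  -- imaginary part of the general term
  have him : ∀ n : ℕ, ((q : ℂ) ^ (2 * (n + 1)) / (1 - (q : ℂ) ^ (2 * (n + 1))) *
      Complex.sin (2 * (π : ℂ) * ((n : ℂ) + 1) * z)).im
      = (q ^ (2 * (n + 1)) / (1 - q ^ (2 * (n + 1)))) *
        (Real.cos (2 * π * ((n : ℝ) + 1) * x) * Real.sinh (2 * π * ((n : ℝ) + 1) * y)) := by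
    intro n
    rw [key n, Complex.im_ofReal_mul, my_sin_im, hWre n, hWim n]
  have hEr' : ∀ n : ℕ, q ^ (2 * (n + 1)) * Real.exp ((n : ℝ) * (2 * π * y)) = q ^ 2 * r ^ n := by
    intro n
    have h1 : q ^ (2 * (n + 1)) = (q ^ 2) ^ (n + 1) := by rw [← pow_mul]
    have h2 : Real.exp ((n : ℝ) * (2 * π * y)) = E ^ n := by
      rw [hEdef, ← Real.exp_nat_mul]
    rw [h1, h2, hrdef, mul_pow, pow_succ]; ring
  have himle : ∀ n : ℕ, ((q : ℂ) ^ (2 * (n + 1)) / (1 - (q : ℂ) ^ (2 * (n + 1))) *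
      Complex.sin (2 * (π : ℂ) * ((n : ℂ) + 1) * z)).im
      ≤ (2 * q ^ 2 * Real.sinh (2 * π * y)) * (((n : ℝ) + 1) * r ^ n) := by
    intro n
    rw [him n]
    have h1 : Real.sinh (2 * π * ((n : ℝ) + 1) * y)
        ≤ ((n : ℝ) + 1) * Real.sinh (2 * π * y) * Real.exp ((n : ℝ) * (2 * π * y)) := by
      have h := my_sinh_succ_le (t := 2 * π * y) (by positivity) n
      rwa [show ((n : ℝ) + 1) * (2 * π * y) = 2 * π * ((n : ℝ) + 1) * y by ring] at h
    have hsh : 0 ≤ Real.sinh (2 * π * ((n : ℝ) + 1) * y) :=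
      Real.sinh_nonneg_iff.2 (by positivity)
    have hsh2 : 0 ≤ Real.sinh (2 * π * y) := Real.sinh_nonneg_iff.2 (by positivity)
    have hcos : Real.cos (2 * π * ((n : ℝ) + 1) * x) ≤ 1 := Real.cos_le_one _
    have step1 : (q ^ (2 * (n + 1)) / (1 - q ^ (2 * (n + 1)))) *
        (Real.cos (2 * π * ((n : ℝ) + 1) * x) * Real.sinh (2 * π * ((n : ℝ) + 1) * y))
        ≤ (q ^ (2 * (n + 1)) / (1 - q ^ (2 * (n + 1)))) *
          Real.sinh (2 * π * ((n : ℝ) + 1) * y) := by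
      apply mul_le_mul_of_nonneg_left _ (hc0 n)
      nlinarith
    have step2 : (q ^ (2 * (n + 1)) / (1 - q ^ (2 * (n + 1)))) *
        Real.sinh (2 * π * ((n : ℝ) + 1) * y)
        ≤ (2 * q ^ (2 * (n + 1))) *
          (((n : ℝ) + 1) * Real.sinh (2 * π * y) * Real.exp ((n : ℝ) * (2 * π * y))) :=
      mul_le_mul (hcle n) h1 hsh (by positivity)
    have step3 : (2 * q ^ (2 * (n + 1))) *
        (((n : ℝ) + 1) * Real.sinh (2 * π * y) * Real.exp ((n : ℝ) * (2 * π * y)))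
        = (2 * q ^ 2 * Real.sinh (2 * π * y)) * (((n : ℝ) + 1) * r ^ n) := by
      rw [show (2 * q ^ (2 * (n + 1))) *
          (((n : ℝ) + 1) * Real.sinh (2 * π * y) * Real.exp ((n : ℝ) * (2 * π * y)))
          = 2 * Real.sinh (2 * π * y) * ((n : ℝ) + 1) *
            (q ^ (2 * (n + 1)) * Real.exp ((n : ℝ) * (2 * π * y))) by ring, hEr' n]
      ring
    linarith
  -- sum of the majorant
  have hrnorm : ‖r‖ < 1 := by rw [Real.norm_eq_abs, _root_.abs_of_nonneg hr0.le]; exact hr1'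
  have hG1 : HasSum (fun n : ℕ => ((n : ℝ) + 1) * r ^ n) (1 / (1 - r) ^ 2) := by
    have h1 := hasSum_coe_mul_geometric_of_norm_lt_one (𝕜 := ℝ) hrnorm
    have h2 := hasSum_geometric_of_lt_one hr0.le hr1'
    have h3 := h1.add h2
    have hfe : (fun n : ℕ => (n : ℝ) * r ^ n + r ^ n) = fun n : ℕ => ((n : ℝ) + 1) * r ^ n := by
      funext n; ring
    rw [hfe] at h3
    convert h3 using 1
    · rfl
    have hne : (1:ℝ) - r ≠ 0 := by linarith
    field_simp
    ring
  have hG : HasSum (fun n : ℕ => (2 * q ^ 2 * Real.sinh (2 * π * y)) * (((n : ℝ) + 1) * r ^ n))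
      ((2 * q ^ 2 * Real.sinh (2 * π * y)) * (1 / (1 - r) ^ 2)) := hG1.mul_left _
  have hsumIm : Summable (fun n : ℕ => ((q : ℂ) ^ (2 * (n + 1)) / (1 - (q : ℂ) ^ (2 * (n + 1))) *
      Complex.sin (2 * (π : ℂ) * ((n : ℂ) + 1) * z)).im) :=
    (Complex.hasSum_im hsumC.hasSum).summable
  have hSle : (∑' n : ℕ, (q : ℂ) ^ (2 * (n + 1)) / (1 - (q : ℂ) ^ (2 * (n + 1))) *
      Complex.sin (2 * (π : ℂ) * ((n : ℂ) + 1) * z)).im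
      ≤ (2 * q ^ 2 * Real.sinh (2 * π * y)) * (1 / (1 - r) ^ 2) := by
    rw [Complex.im_tsum hsumC]
    calc (∑' n : ℕ, ((q : ℂ) ^ (2 * (n + 1)) / (1 - (q : ℂ) ^ (2 * (n + 1))) *
          Complex.sin (2 * (π : ℂ) * ((n : ℂ) + 1) * z)).im)
        ≤ ∑' n : ℕ, (2 * q ^ 2 * Real.sinh (2 * π * y)) * (((n : ℝ) + 1) * r ^ n) :=
          Summable.tsum_le_tsum himle hsumIm hG.summable
      _ = _ := hG.tsum_eq
  -- cotangent part
  have hre : ((π : ℂ) * z).re = π * x := Complex.re_ofReal_mul _ _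
  have him2 : ((π : ℂ) * z).im = π * y := Complex.im_ofReal_mul _ _
  set N := Complex.normSq (Complex.sin ((π : ℂ) * z)) with hNdef
  have hN : N = Real.sin (π * x) ^ 2 + Real.sinh (π * y) ^ 2 := by
    rw [hNdef, Complex.normSq_apply, my_sin_re, my_sin_im, hre, him2]
    linear_combination (Real.sin (π * x)) ^ 2 * Real.cosh_sq (π * y) +
      (Real.sinh (π * y)) ^ 2 * Real.sin_sq_add_cos_sq (π * x)
  have hsinh : 0 < Real.sinh (π * y) := Real.sinh_pos_iff.2 (by positivity)
  have hcosh : 0 < Real.cosh (π * y) := Real.cosh_pos _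
  have hN0 : 0 < N := by
    rw [hN]
    have h1 := pow_pos hsinh 2
    have h2 := sq_nonneg (Real.sin (π * x))
    linarith
  have hImA : ((π : ℂ) * Complex.cos ((π : ℂ) * z) / Complex.sin ((π : ℂ) * z)).im
      = -(π * (Real.sinh (π * y) * Real.cosh (π * y))) / N := by
    rw [Complex.div_im, Complex.im_ofReal_mul, Complex.re_ofReal_mul,
      my_cos_im, my_cos_re, my_sin_im, my_sin_re, hre, him2, ← hNdef, div_sub_div_same]
    congr 1
    linear_combination (-(π * (Real.sinh (π * y) * Real.cosh (π * y)))) *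
      Real.sin_sq_add_cos_sq (π * x)
  have hNle : N ≤ r / q ^ 2 := by
    have h1 : Real.cosh (π * y) ≤ Real.exp (π * y) := my_cosh_le_exp (by positivity)
    have h2 : Real.exp (π * y) ^ 2 = E := by rw [hEdef, sq, ← Real.exp_add]; ring_nf
    have h3 : r / q ^ 2 = E := by rw [hrdef]; field_simp
    have h4 : Real.cosh (π * y) * Real.cosh (π * y) ≤ Real.exp (π * y) * Real.exp (π * y) :=
      mul_self_le_mul_self hcosh.le h1
    rw [hN, h3, ← h2]
    nlinarith [Real.sin_sq_add_cos_sq (π * x), Real.cosh_sq (π * y),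
      sq_nonneg (Real.cos (π * x))]
  -- final assembly
  rw [Complex.add_im]
  rw [show (4 : ℂ) * (π : ℂ) = ((4 * π : ℝ) : ℂ) by push_cast; ring,
    Complex.im_ofReal_mul, hImA]
  have hshy : Real.sinh (2 * π * y) = 2 * Real.sinh (π * y) * Real.cosh (π * y) := by
    rw [show 2 * π * y = 2 * (π * y) by ring, Real.sinh_two_mul]
  have hd2 : (0:ℝ) < (1 - r) ^ 2 := by
    have : (0:ℝ) < 1 - r := by linarith
    positivity
  have h16 : 16 * q ^ 2 * N < (1 - r) ^ 2 := by
    have h1 : 16 * q ^ 2 * N ≤ 16 * q ^ 2 * (r / q ^ 2) :=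
      mul_le_mul_of_nonneg_left hNle (by positivity)
    have h2 : 16 * q ^ 2 * (r / q ^ 2) = 16 * r := by field_simp
    nlinarith
  have hkey : 16 * π * q ^ 2 * (Real.sinh (π * y) * Real.cosh (π * y)) / (1 - r) ^ 2
      < π * (Real.sinh (π * y) * Real.cosh (π * y)) / N := by
    rw [div_lt_div_iff₀ hd2 hN0]
    nlinarith [mul_lt_mul_of_pos_left h16 (mul_pos hπ (mul_pos hsinh hcosh))]
  have hTb : (4 * π) * (∑' n : ℕ, (q : ℂ) ^ (2 * (n + 1)) / (1 - (q : ℂ) ^ (2 * (n + 1))) *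
      Complex.sin (2 * (π : ℂ) * ((n : ℂ) + 1) * z)).im
      ≤ 16 * π * q ^ 2 * (Real.sinh (π * y) * Real.cosh (π * y)) / (1 - r) ^ 2 := by
    have h := mul_le_mul_of_nonneg_left hSle (by positivity : (0:ℝ) ≤ 4 * π)
    have h2 : (4 * π) * ((2 * q ^ 2 * Real.sinh (2 * π * y)) * (1 / (1 - r) ^ 2))
        = 16 * π * q ^ 2 * (Real.sinh (π * y) * Real.cosh (π * y)) / (1 - r) ^ 2 := by
      rw [hshy]; field_simp; ring
    linarith
  have hfin := lt_of_le_of_lt hTb hkey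
  rw [neg_div]
  linarith [hfin]
end

section
/- For all real numbers a, b with 0 < b < a < 1, the function x ↦ x^{−a}·((1+x)^b − x^b) is Lebesgue integrable on (0, ∞) and ∫₀^∞ x^{−a}·((1+x)^b − x^b) dx = Γ(1−a)·Γ(a−b−1)/Γ(−b), where Γ denotes the real Gamma function (extended by its standard meromorphic continuation; note that a−b−1 ∈ (−1,0) and −b ∈ (−1,0) are not poles of Γ). -/
open Real MeasureTheory Set


lemma real_beta_Ioo {p q : ℝ} (hp : 0 < p) (hq : 0 < q) :
    ∫ x in Ioo (0:ℝ) 1, x ^ (p-1) * (1-x) ^ (q-1) =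
      Real.Gamma p * Real.Gamma q / Real.Gamma (p+q) := by
  have hc := Complex.Gamma_mul_Gamma_eq_betaIntegral (s := (p:ℂ)) (t := (q:ℂ))
    (by simpa using hp) (by simpa using hq)
  have hbeta : Complex.betaIntegral p q = ((∫ x in Ioo (0:ℝ) 1, x ^ (p-1) * (1-x) ^ (q-1) : ℝ) : ℂ) := by
    rw [Complex.betaIntegral]
    rw [show (∫ x in Ioo (0:ℝ) 1, x ^ (p-1) * (1-x) ^ (q-1))
        = ∫ x in (0:ℝ)..1, x ^ (p-1) * (1-x) ^ (q-1) by
      rw [intervalIntegral.integral_of_le zero_le_one, integral_Ioc_eq_integral_Ioo]]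
    rw [← intervalIntegral.integral_ofReal]
    refine intervalIntegral.integral_congr fun x hx => ?_
    rw [uIcc_of_le zero_le_one] at hx
    rw [Complex.ofReal_mul, Complex.ofReal_cpow hx.1, Complex.ofReal_cpow (by linarith [hx.2] : (0:ℝ) ≤ 1 - x)]
    push_cast
    ring
  rw [hbeta, ← Complex.ofReal_add, Complex.Gamma_ofReal, Complex.Gamma_ofReal,
    Complex.Gamma_ofReal, ← Complex.ofReal_mul, ← Complex.ofReal_mul] at hc
  have := Complex.ofReal_injective hc
  rw [eq_div_iff (Real.Gamma_pos_of_pos (by linarith)).ne', mul_comm] at *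
  linarith [this]

lemma image_div_one_add : (fun x : ℝ => x / (1 + x)) '' Ioi 0 = Ioo 0 1 := by
  ext u
  constructor
  · rintro ⟨x, hx, rfl⟩
    have hx' : (0:ℝ) < x := hx
    have h1 : (0:ℝ) < 1 + x := by linarith
    exact ⟨div_pos hx' h1, (div_lt_one h1).2 (by linarith)⟩
  · rintro ⟨hu0, hu1⟩
    refine ⟨u / (1 - u), div_pos hu0 (by linarith), ?_⟩
    have h1 : (1:ℝ) - u ≠ 0 := by linarith
    field_simp
    ring

lemma hasDeriv_div_one_add {x : ℝ} (hx : (0:ℝ) < x) :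
    HasDerivAt (fun x : ℝ => x / (1 + x)) (((1 + x) ^ 2)⁻¹) x := by
  have h1 : (1:ℝ) + x ≠ 0 := by linarith
  have := (hasDerivAt_id x).div ((hasDerivAt_id x).const_add 1) h1
  convert this using 1
  · rfl
  · rfl
  · rfl
  · simp

lemma injOn_div_one_add : InjOn (fun x : ℝ => x / (1 + x)) (Ioi 0) := by
  intro x hx y hy h
  have hx' : (0:ℝ) < 1 + x := by have : (0:ℝ) < x := hx; linarith
  have hy' : (0:ℝ) < 1 + y := by have : (0:ℝ) < y := hy; linarith
  field_simp at h
  linarith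

lemma real_beta_Ioi {p q : ℝ} (hp : 0 < p) (hq : 0 < q) :
    ∫ x in Ioi (0:ℝ), x ^ (p-1) * (1 + x) ^ (-(p+q)) =
      Real.Gamma p * Real.Gamma q / Real.Gamma (p+q) := by
  rw [← real_beta_Ioo hp hq, ← image_div_one_add,
    integral_image_eq_integral_abs_deriv_smul measurableSet_Ioi
      (fun x hx => (hasDeriv_div_one_add hx).hasDerivWithinAt) injOn_div_one_add]
  refine setIntegral_congr_fun measurableSet_Ioi fun x hx => ?_
  have hx' : (0:ℝ) < x := hx
  have h1 : (0:ℝ) < 1 + x := by linarith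
  have h2 : (1:ℝ) - x / (1 + x) = (1 + x)⁻¹ := by field_simp; ring
  rw [smul_eq_mul, h2, abs_of_pos (by positivity), Real.div_rpow hx'.le h1.le,
    ← Real.rpow_neg_one (1 + x), ← Real.rpow_natCast (1+x) 2, ← Real.rpow_neg h1.le,
    ← Real.rpow_mul h1.le]
  rw [div_eq_mul_inv, ← Real.rpow_neg h1.le, neg_one_mul]
  rw [mul_left_comm, mul_assoc, ← Real.rpow_add h1, ← Real.rpow_add h1,
    show -(p-1) + (-((2:ℕ):ℝ) + -(q-1))= -(p+q) by push_cast; ring]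

lemma real_beta_Ioi_scaled {p q : ℝ} (hp : 0 < p) (hq : 0 < q) {t : ℝ} (ht : 0 < t) :
    ∫ x in Ioi (0:ℝ), x ^ (p-1) * (t + x) ^ (-(p+q)) =
      t ^ (-q) * (Real.Gamma p * Real.Gamma q / Real.Gamma (p+q)) := by
  have h := MeasureTheory.integral_comp_mul_left_Ioi
    (fun x => x ^ (p-1) * (t + x) ^ (-(p+q))) 0 ht
  rw [mul_zero] at h
  have key : (∫ x in Ioi (0:ℝ), (fun x => x ^ (p-1) * (t + x) ^ (-(p+q))) (t * x))
      = t ^ (-1-q) * ∫ x in Ioi (0:ℝ), x ^ (p-1) * (1 + x) ^ (-(p+q)) := by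
    rw [← MeasureTheory.integral_const_mul]
    refine setIntegral_congr_fun measurableSet_Ioi fun x hx => ?_
    have hx' : (0:ℝ) < x := hx
    simp only
    rw [Real.mul_rpow ht.le hx'.le, show t + t*x = t*(1+x) by ring,
      Real.mul_rpow ht.le (by linarith)]
    rw [show t ^ (p-1) * x ^ (p-1) * (t ^ (-(p+q)) * (1+x) ^ (-(p+q)))
        = t ^ (p-1) * t ^ (-(p+q)) * (x ^ (p-1) * (1+x) ^ (-(p+q))) by ring,
      ← Real.rpow_add ht, show p - 1 + -(p+q) = -1-q by ring]
  rw [key, real_beta_Ioi hp hq, smul_eq_mul] at h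
  have := h.symm
  rw [inv_mul_eq_iff_eq_mul₀ ht.ne'] at this
  rw [this, ← mul_assoc, ← Real.rpow_one_add' ht.le (by intro hc; nlinarith : 1 + (-1-q) ≠ 0),
    show 1 + (-1-q) = -q by ring]

lemma rpow_sub_rpow_eq_integral {b : ℝ} (hb : 0 < b) {x : ℝ} (hx : 0 < x) :
    (1 + x) ^ b - x ^ b = ∫ t in Ioo (0:ℝ) 1, b * (x + t) ^ (b - 1) := by
  have hderiv : ∀ t ∈ uIcc (0:ℝ) 1, HasDerivAt (fun t => (x + t) ^ b) (b * (x + t) ^ (b-1)) t := by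
    intro t ht
    rw [uIcc_of_le zero_le_one] at ht
    have hxt : x + t ≠ 0 := by have := ht.1; positivity
    have h1 := (Real.hasDerivAt_rpow_const (p := b) (Or.inl hxt)).comp t
      ((hasDerivAt_id t).const_add x)
    simpa [Function.comp_def] using h1
  have hcont : ContinuousOn (fun t => b * (x + t) ^ (b-1)) (uIcc (0:ℝ) 1) := by
    refine continuousOn_const.mul (ContinuousOn.rpow_const ?_ fun t ht => ?_)
    · exact (continuous_const.add continuous_id).continuousOn
    · rw [uIcc_of_le zero_le_one] at ht
      have := ht.1; exact Or.inl (by positivity)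
  have h := intervalIntegral.integral_eq_sub_of_hasDerivAt hderiv
    (hcont.intervalIntegrable)
  rw [intervalIntegral.integral_of_le zero_le_one, integral_Ioc_eq_integral_Ioo] at h
  rw [h, add_zero, add_comm x 1]

lemma integrableOn_kernel {b : ℝ} (hb : 0 < b) (hb1 : b < 1) {x : ℝ} (hx : 0 < x) :
    IntegrableOn (fun t => b * (x + t) ^ (b - 1)) (Ioo (0:ℝ) 1) := by
  refine (ContinuousOn.integrableOn_compact isCompact_Icc ?_).mono_set Ioo_subset_Icc_self
  refine continuousOn_const.mul (ContinuousOn.rpow_const ?_ fun t ht => ?_)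
  · exact (continuous_const.add continuous_id).continuousOn
  · have := ht.1; exact Or.inl (by positivity)

lemma rpow_sub_rpow_le {b : ℝ} (hb : 0 < b) (hb1 : b < 1) {x : ℝ} (hx : 0 < x) :
    (1 + x) ^ b - x ^ b ≤ b * x ^ (b - 1) := by
  rw [rpow_sub_rpow_eq_integral hb hx]
  have h1 : ∫ t in Ioo (0:ℝ) 1, b * x ^ (b-1) = b * x ^ (b-1) := by
    simp [Real.volume_Ioo]
  rw [← h1]
  refine setIntegral_mono_on (integrableOn_kernel hb hb1 hx)
    (integrableOn_const (by simp [Real.volume_Ioo])) measurableSet_Ioo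
    fun t ht => ?_
  have ht0 : 0 < t := ht.1
  exact mul_le_mul_of_nonneg_left
    (Real.rpow_le_rpow_of_nonpos hx (by linarith) (by linarith)) hb.le

lemma main_integrable {a b : ℝ} (hb : 0 < b) (hba : b < a) (ha : a < 1) :
    IntegrableOn (fun x : ℝ => x ^ (-a) * ((1 + x) ^ b - x ^ b)) (Ioi 0) := by
  have hmeas : Measurable fun x : ℝ => x ^ (-a) * ((1 + x) ^ b - x ^ b) := by
    fun_prop
  have h1 : IntegrableOn (fun x : ℝ => x ^ (-a) * ((1 + x) ^ b - x ^ b)) (Ioc 0 1) := by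
    refine Integrable.mono' ((intervalIntegral.intervalIntegrable_rpow'
      (show (-1:ℝ) < -a by linarith)).1.const_mul (2 ^ b))
      hmeas.aestronglyMeasurable ?_
    filter_upwards [ae_restrict_mem measurableSet_Ioc] with x hx
    have hx0 : 0 < x := hx.1
    have hnn : 0 ≤ (1 + x) ^ b - x ^ b :=
      sub_nonneg.2 (Real.rpow_le_rpow hx0.le (by linarith) hb.le)
    rw [Real.norm_eq_abs, abs_of_nonneg (by positivity)]
    rw [mul_comm ((2:ℝ)^b)]
    refine mul_le_mul_of_nonneg_left ?_ (by positivity)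
    calc (1 + x) ^ b - x ^ b ≤ (1 + x) ^ b := by
          have : (0:ℝ) ≤ x ^ b := by positivity
          linarith
      _ ≤ 2 ^ b := Real.rpow_le_rpow (by linarith) (by linarith [hx.2]) hb.le
  have h2 : IntegrableOn (fun x : ℝ => x ^ (-a) * ((1 + x) ^ b - x ^ b)) (Ioi 1) := by
    refine Integrable.mono' ((integrableOn_Ioi_rpow_of_lt
      (show b - 1 + -a < -1 by linarith) zero_lt_one).const_mul b)
      hmeas.aestronglyMeasurable ?_
    filter_upwards [ae_restrict_mem measurableSet_Ioi] with x hx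
    have hx1 : (1:ℝ) < x := hx
    have hx0 : (0:ℝ) < x := by linarith
    have hnn : 0 ≤ (1 + x) ^ b - x ^ b :=
      sub_nonneg.2 (Real.rpow_le_rpow hx0.le (by linarith) hb.le)
    rw [Real.norm_eq_abs, abs_of_nonneg (by positivity)]
    calc x ^ (-a) * ((1 + x) ^ b - x ^ b) ≤ x ^ (-a) * (b * x ^ (b-1)) :=
          mul_le_mul_of_nonneg_left (rpow_sub_rpow_le hb (by linarith) hx0) (by positivity)
      _ = b * x ^ (b - 1 + -a) := by
          rw [Real.rpow_add hx0]; ring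
  have := h1.union h2
  rwa [Ioc_union_Ioi_eq_Ioi zero_le_one] at this

/-- The beta-type integral `∫₀^∞ x^{−a}((1+x)^b − x^b) dx = Γ(1−a)Γ(a−b−1)/Γ(−b)`
for `0 < b < a < 1`, used in the proof of the OPE Lemma 5.6 (lem:ope1). -/
theorem integral_rpow_one_add_rpow_sub_rpow {a b : ℝ}
    (hb : 0 < b) (hba : b < a) (ha : a < 1) :
    IntegrableOn (fun x : ℝ => x ^ (-a) * ((1 + x) ^ b - x ^ b)) (Ioi 0) ∧
      ∫ x in Ioi (0 : ℝ), x ^ (-a) * ((1 + x) ^ b - x ^ b) =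
        Real.Gamma (1 - a) * Real.Gamma (a - b - 1) / Real.Gamma (-b) := by
  have hInt := main_integrable hb hba ha
  refine ⟨hInt, ?_⟩
  set μ := volume.restrict (Ioi (0:ℝ))
  set ν := volume.restrict (Ioo (0:ℝ) 1)
  set F : ℝ → ℝ → ℝ := fun x t => x ^ (-a) * (b * (x + t) ^ (b - 1)) with hF
  have hFmeas : AEStronglyMeasurable (Function.uncurry F) (μ.prod ν) := by
    apply Measurable.aestronglyMeasurable
    fun_prop
  have hsec : ∀ᵐ x ∂μ, Integrable (F x) ν := by
    rw [ae_restrict_iff' measurableSet_Ioi]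
    filter_upwards with x hx
    exact ((integrableOn_kernel hb (by linarith) hx).const_mul _)
  have hker_nonneg : ∀ x : ℝ, 0 < x → ∀ t ∈ Ioo (0:ℝ) 1, 0 ≤ F x t := by
    intro x hx t ht
    have := ht.1
    have : 0 < x + t := by linarith
    positivity
  have hnormint : ∀ x : ℝ, 0 < x →
      (∫ t, ‖F x t‖ ∂ν) = x ^ (-a) * ((1 + x) ^ b - x ^ b) := by
    intro x hx
    have h1 : (∫ t, ‖F x t‖ ∂ν) = ∫ t, F x t ∂ν := by
      refine setIntegral_congr_fun measurableSet_Ioo fun t ht => ?_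
      exact Real.norm_of_nonneg (hker_nonneg x hx t ht)
    rw [h1, hF]
    simp only
    rw [MeasureTheory.integral_const_mul, ← rpow_sub_rpow_eq_integral hb hx]
  have hnorm : Integrable (fun x => ∫ t, ‖F x t‖ ∂ν) μ := by
    refine hInt.congr ?_
    filter_upwards [ae_restrict_mem measurableSet_Ioi] with x hx
    exact (hnormint x hx).symm
  have hFint : Integrable (Function.uncurry F) (μ.prod ν) :=
    (integrable_prod_iff hFmeas).2 ⟨hsec, hnorm⟩
  have hswap := MeasureTheory.integral_integral_swap hFint
  -- LHS of swap equals our integral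
  have hL : (∫ x, ∫ t, F x t ∂ν ∂μ) = ∫ x in Ioi (0:ℝ), x ^ (-a) * ((1 + x) ^ b - x ^ b) := by
    refine setIntegral_congr_fun measurableSet_Ioi fun x hx => ?_
    have := hnormint x hx
    rw [← this]
    refine setIntegral_congr_fun measurableSet_Ioo fun t ht => ?_
    exact (Real.norm_of_nonneg (hker_nonneg x hx t ht)).symm
  -- RHS of swap
  set C : ℝ := Real.Gamma (1-a) * Real.Gamma (a-b) / Real.Gamma (1-b) with hC
  have hR : (∫ t, ∫ x, F x t ∂μ ∂ν) = ∫ t in Ioo (0:ℝ) 1, b * C * t ^ (b - a) := by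
    refine setIntegral_congr_fun measurableSet_Ioo fun t ht => ?_
    have ht0 : 0 < t := ht.1
    have hinner : (∫ x, F x t ∂μ) = b * ∫ x in Ioi (0:ℝ), x ^ ((1-a)-1) * (t + x) ^ (-((1-a)+(a-b))) := by
      rw [← MeasureTheory.integral_const_mul]
      refine setIntegral_congr_fun measurableSet_Ioi fun x hx => ?_
      rw [hF]
      simp only
      rw [show (1-a)-1 = -a by ring, show -((1-a)+(a-b)) = b-1 by ring, add_comm t x]
      ring
    rw [hinner, real_beta_Ioi_scaled (by linarith) (by linarith) ht0,
      show (1-a)+(a-b) = 1-b by ring, show -(a-b) = b-a by ring, ← hC]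
    ring
  have houter : ∫ t in Ioo (0:ℝ) 1, b * C * t ^ (b - a) = b * C * (1 / (b - a + 1)) := by
    rw [MeasureTheory.integral_const_mul,
      show (∫ t in Ioo (0:ℝ) 1, t ^ (b-a)) = ∫ t in (0:ℝ)..1, t ^ (b-a) by
        rw [intervalIntegral.integral_of_le zero_le_one, integral_Ioc_eq_integral_Ioo],
      integral_rpow (Or.inl (by linarith)), Real.one_rpow,
      Real.zero_rpow (ne_of_gt (by linarith : (0:ℝ) < b - a + 1))]
    ring
  rw [← hL, hswap, hR, houter]
  -- final Gamma arithmetic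
  have hab1 : a - b - 1 ≠ 0 := by linarith
  have hnb : -b ≠ 0 := by linarith
  have hGab : Real.Gamma (a - b) = (a - b - 1) * Real.Gamma (a - b - 1) := by
    have h := Real.Gamma_add_one hab1
    rw [show a - b - 1 + 1 = a - b by ring] at h
    exact h
  have hG1b : Real.Gamma (1 - b) = (-b) * Real.Gamma (-b) := by
    have h := Real.Gamma_add_one hnb
    rw [show -b + 1 = 1 - b by ring] at h
    exact h
  have hGnb : Real.Gamma (-b) ≠ 0 := by
    refine Real.Gamma_ne_zero fun m => ?_
    rcases m with _ | m
    · simpa using hnb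
    · push_cast; intro hc; nlinarith [Nat.cast_nonneg (α := ℝ) m]
  have hGab1 : Real.Gamma (a - b - 1) ≠ 0 := by
    refine Real.Gamma_ne_zero fun m => ?_
    rcases m with _ | m
    · simpa using hab1
    · push_cast; intro hc; nlinarith [Nat.cast_nonneg (α := ℝ) m]
  rw [hC, hGab, hG1b]
  have hba1 : b - a + 1 ≠ 0 := ne_of_gt (by linarith)
  field_simp
  ring
end
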